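/- For each pair of reduced cyclic words 𝒲 and 𝒵 and each linked pair (P,Q) ∈ 𝕃ℙ₂(𝒲,𝒵), the cyclic word γ(P,Q) is a non-empty reduced cyclic word. -/

import Mathlib

open List

namespace CyclicWords

/-- A letter of the alphabet `𝔸ₙ = {a₁,…,aₙ, ā₁,…,āₙ}`: a generator index together
with a Boolean recording whether the letter is barred. -/
abbrev Letter (n : ℕ) := Bool × Fin n

/-- The involution `x ↦ x̄` on letters. -/
def Letter.bar {n : ℕ} (x : Letter n) : Letter n := (!x.1, x.2)

/-- A linear word: a finite sequence of letters. -/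
abbrev Word (n : ℕ) := List (Letter n)

/-- `W̄ = x̄ₘ ⋯ x̄₁ x̄₀` for `W = x₀x₁⋯xₘ`. -/
def Word.bar {n : ℕ} (W : Word n) : Word n := (W.map Letter.bar).reverse

/-- `Wᵏ`, the concatenation of `k` copies of `W`. -/
def wpow {n : ℕ} (W : Word n) (k : ℕ) : Word n := (List.replicate k W).flatten

/-- A linear word is freely reduced when consecutive letters are never inverse
to each other. -/
def FreelyReduced {n : ℕ} (W : Word n) : Prop :=
  W.Chain' (fun a b => b ≠ Letter.bar a)

/-- A cyclic word: an equivalence class of linear words under cyclic rotation. -/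
abbrev CWord (n : ℕ) := Cycle (Letter n)

/-- `c(W)`, the cyclic word represented by the linear word `W`. -/
def cyc {n : ℕ} (W : Word n) : CWord n := ↑W

/-- The length of a cyclic word. -/
def clen {n : ℕ} (𝒲 : CWord n) : ℕ := 𝒲.length

/-- A cyclic word is reduced if it is non-empty and all of its linear
representatives are freely reduced. -/
def CReduced {n : ℕ} (𝒲 : CWord n) : Prop :=
  𝒲 ≠ Cycle.nil ∧ ∀ W : Word n, cyc W = 𝒲 → FreelyReduced W

/-- `P` is a (linear) subword of the cyclic word `𝒲`, i.e. a linear subword of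
one of its linear representatives. -/
def Subword {n : ℕ} (P : Word n) (𝒲 : CWord n) : Prop :=
  ∃ W : Word n, cyc W = 𝒲 ∧ P <:+: W

/-- `P` is a subword of the power `𝒲ʲ`. -/
def SubwordPow {n : ℕ} (P : Word n) (𝒲 : CWord n) (j : ℕ) : Prop :=
  ∃ W : Word n, cyc W = 𝒲 ∧ P <:+: wpow W j

/-- A surface symbol: a reduced cyclic word in which every letter of `𝔸ₙ`
appears exactly once. -/
def SurfaceSymbol {n : ℕ} (𝒪 : CWord n) : Prop :=
  CReduced 𝒪 ∧ ∃ O : Word n, cyc O = 𝒪 ∧ O.Nodup ∧ ∀ x : Letter n, x ∈ O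

/-- `𝒲` is reduced and its (distinct) letters embed into `𝒪` preserving the
cyclic order. -/
def OrientPos {n : ℕ} (𝒪 𝒲 : CWord n) : Prop :=
  CReduced 𝒲 ∧ ∃ W O : Word n, cyc W = 𝒲 ∧ cyc O = 𝒪 ∧ W.Sublist O

/-- `𝒲` is reduced and its (distinct) letters embed into `𝒪` reversing the
cyclic order. -/
def OrientNeg {n : ℕ} (𝒪 𝒲 : CWord n) : Prop :=
  CReduced 𝒲 ∧ ∃ W O : Word n, cyc W = 𝒲 ∧ cyc O = 𝒪 ∧ W.Sublist O.reverse

open Classical in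
/-- The number `o(𝒲) ∈ {-1,0,1}` associated to a cyclic word `𝒲`. -/
noncomputable def o {n : ℕ} (𝒪 𝒲 : CWord n) : ℤ :=
  if OrientPos 𝒪 𝒲 then 1 else if OrientNeg 𝒪 𝒲 then -1 else 0

/-- Condition (1) of the definition of `𝒪`-linked pairs. -/
def LinkedType1 {n : ℕ} (𝒪 : CWord n) (P Q : Word n) : Prop :=
  ∃ p₁ p₂ q₁ q₂ : Letter n, P = [p₁, p₂] ∧ Q = [q₁, q₂] ∧
    o 𝒪 (cyc [Letter.bar p₁, Letter.bar q₁, p₂, q₂]) ≠ 0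

/-- Condition (2) of the definition of `𝒪`-linked pairs (`x₁`, `x₂` denote the
first and last letters of `Y`). -/
def LinkedType2 {n : ℕ} (𝒪 : CWord n) (P Q : Word n) : Prop :=
  ∃ (p₁ p₂ q₁ q₂ : Letter n) (Y : Word n), Y ≠ [] ∧
    P = p₁ :: Y ++ [p₂] ∧ Q = q₁ :: Y ++ [q₂] ∧ p₁ ≠ q₁ ∧ p₂ ≠ q₂ ∧
    ∀ x₁ x₂ : Letter n, Y.head? = some x₁ → Y.getLast? = some x₂ →
      o 𝒪 (cyc [Letter.bar p₁, Letter.bar q₁, x₁]) = o 𝒪 (cyc [p₂, q₂, Letter.bar x₂])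

/-- Condition (3) of the definition of `𝒪`-linked pairs. -/
def LinkedType3 {n : ℕ} (𝒪 : CWord n) (P Q : Word n) : Prop :=
  ∃ (p₁ p₂ q₁ q₂ : Letter n) (Y : Word n), Y ≠ [] ∧
    P = p₁ :: Y ++ [p₂] ∧ Q = q₁ :: Word.bar Y ++ [q₂] ∧
    p₁ ≠ Letter.bar q₂ ∧ p₂ ≠ Letter.bar q₁ ∧
    ∀ x₁ x₂ : Letter n, Y.head? = some x₁ → Y.getLast? = some x₂ →
      o 𝒪 (cyc [q₂, Letter.bar p₁, x₁]) = o 𝒪 (cyc [Letter.bar q₁, p₂, Letter.bar x₂])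

/-- The ordered pair `(P,Q)` is `𝒪`-linked. -/
def IsLinked {n : ℕ} (𝒪 : CWord n) (P Q : Word n) : Prop :=
  FreelyReduced P ∧ FreelyReduced Q ∧ 2 ≤ P.length ∧ 2 ≤ Q.length ∧
    (LinkedType1 𝒪 P Q ∨ LinkedType2 𝒪 P Q ∨ LinkedType3 𝒪 P Q)

open Classical in
/-- The sign of a linked pair `(P,Q)`. -/
noncomputable def sign {n : ℕ} (𝒪 : CWord n) (P Q : Word n) : ℤ :=
  match P, Q with
  | p₁ :: ps, q₁ :: qs =>
    match ps.getLast?, qs.getLast?, ps.head? with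
    | some p₂, some q₂, some x₁ =>
      if LinkedType1 𝒪 (p₁ :: ps) (q₁ :: qs) then
        o 𝒪 (cyc [Letter.bar p₁, Letter.bar q₁, p₂, q₂])
      else if LinkedType2 𝒪 (p₁ :: ps) (q₁ :: qs) then
        o 𝒪 (cyc [Letter.bar p₁, Letter.bar q₁, x₁])
      else if LinkedType3 𝒪 (p₁ :: ps) (q₁ :: qs) then
        o 𝒪 (cyc [q₂, Letter.bar p₁, x₁])
      else 0
    | _, _, _ => 0
  | _, _ => 0

/-- `𝕃ℙ₁(𝒲)`: `(P,Q)` is an `𝒪`-linked pair of subwords of `𝒲`. -/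
def LP1 {n : ℕ} (𝒪 𝒲 : CWord n) (P Q : Word n) : Prop :=
  IsLinked 𝒪 P Q ∧ Subword P 𝒲 ∧ Subword Q 𝒲

/-- `𝕃ℙ₂(𝒱,𝒲)`: `(P,Q)` is an `𝒪`-linked pair with `P` a subword of `𝒱ʲ`,
`Q` a subword of `𝒲ᵏ` in the appropriate length windows. -/
def LP2 {n : ℕ} (𝒪 𝒱 𝒲 : CWord n) (P Q : Word n) : Prop :=
  IsLinked 𝒪 P Q ∧
    ∃ j k : ℕ, 0 < j ∧ 0 < k ∧ SubwordPow P 𝒱 j ∧ SubwordPow Q 𝒲 k ∧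
      (j - 1) * clen 𝒱 < P.length ∧ P.length ≤ j * clen 𝒱 ∧
      (k - 1) * clen 𝒲 < Q.length ∧ Q.length ≤ k * clen 𝒲

/-- The cut data for `δ` when `(P,Q)` has type (1) or (2): two cuts of `𝒲`
producing `W₁` (starting at the occurrence of `p₂`, the last letter of `P`) and
`W₂` (starting at the occurrence of `q₂`, the last letter of `Q`). -/
def DeltaPair12 {n : ℕ} (𝒪 𝒲 : CWord n) (P Q W₁ W₂ : Word n) : Prop :=
  (LinkedType1 𝒪 P Q ∨ LinkedType2 𝒪 P Q) ∧
  𝒲 = cyc (W₁ ++ W₂) ∧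
  (∃ (P' : Word n) (p₂ : Letter n), P = P' ++ [p₂] ∧ W₁.head? = some p₂ ∧
      P' <:+ W₁ ++ W₂) ∧
  (∃ (Q' : Word n) (q₂ : Letter n), Q = Q' ++ [q₂] ∧ W₂.head? = some q₂ ∧
      Q' <:+ W₂ ++ W₁)

/-- The cut data for `δ` when `(P,Q)` has type (3): `W₁` runs from `p₂` to
`q₁`, and `W₂` from `q₂` to `p₁`. -/
def DeltaPair3 {n : ℕ} (𝒪 𝒲 : CWord n) (P Q W₁ W₂ : Word n) : Prop :=
  LinkedType3 𝒪 P Q ∧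
  ∃ (p₁ p₂ q₁ q₂ : Letter n) (Y Y' : Word n), Y ≠ [] ∧ Y' ≠ [] ∧
    P = p₁ :: Y ++ [p₂] ∧ Q = q₁ :: Y' ++ [q₂] ∧
    W₁.head? = some p₂ ∧ W₁.getLast? = some q₁ ∧
    W₂.head? = some q₂ ∧ W₂.getLast? = some p₁ ∧
    𝒲 = cyc (W₁ ++ Y' ++ W₂ ++ Y)

/-- The words `W₁`, `W₂` obtained by cutting `𝒲` along the linked pair `(P,Q)`. -/
def DeltaPair {n : ℕ} (𝒪 𝒲 : CWord n) (P Q W₁ W₂ : Word n) : Prop :=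
  DeltaPair12 𝒪 𝒲 P Q W₁ W₂ ∨ DeltaPair3 𝒪 𝒲 P Q W₁ W₂

open Classical in
/-- A choice of the pair of linear words obtained by cutting `𝒲` along `(P,Q)`. -/
noncomputable def deltaW {n : ℕ} (𝒪 𝒲 : CWord n) (P Q : Word n) : Word n × Word n :=
  if h : ∃ W : Word n × Word n, DeltaPair 𝒪 𝒲 P Q W.1 W.2 then h.choose else ([], [])

/-- The cyclic word `δ₁(P,Q)`. -/
noncomputable def delta1 {n : ℕ} (𝒪 𝒲 : CWord n) (P Q : Word n) : CWord n :=
  cyc (deltaW 𝒪 𝒲 P Q).1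

/-- The cyclic word `δ₂(P,Q)`. -/
noncomputable def delta2 {n : ℕ} (𝒪 𝒲 : CWord n) (P Q : Word n) : CWord n :=
  cyc (deltaW 𝒪 𝒲 P Q).2

/-- `W₁` is the linear representative of `↑W₁` obtained by cutting immediately
before (the occurrence of) the last letter of `P`: `P` occurs (in a power)
ending exactly at the cut. -/
def CutEnds {n : ℕ} (W₁ P : Word n) : Prop :=
  ∃ (P' : Word n) (p₂ : Letter n) (j : ℕ),
    P = P' ++ [p₂] ∧ W₁.head? = some p₂ ∧ P' <:+ wpow W₁ j

/-- The data for `γ(P,Q)` when `(P,Q) ∈ 𝕃ℙ₂(𝒱,𝒲)` has type (1) or (2):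
`γ(P,Q) = c(V₁W₁)` where `V₁`, `W₁` are the representatives of `𝒱`, `𝒲` obtained
by cutting immediately before `p₂`, resp. `q₂`. -/
def GammaPair12 {n : ℕ} (𝒪 𝒱 𝒲 : CWord n) (P Q : Word n) (G : CWord n) : Prop :=
  (LinkedType1 𝒪 P Q ∨ LinkedType2 𝒪 P Q) ∧
  ∃ V₁ W₁ : Word n, cyc V₁ = 𝒱 ∧ cyc W₁ = 𝒲 ∧ CutEnds V₁ P ∧ CutEnds W₁ Q ∧
    G = cyc (V₁ ++ W₁)

/-- The data for `γ(P,Q)` when `(P,Q) ∈ 𝕃ℙ₂(𝒱,𝒲)` has type (3):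
`V₁` is the subword of `𝒱` starting right after the end of `Y` and ending right
before the first letter of `Y` (whose footprint in `𝒱` is the arc `U`), and
similarly `W₁` for `Ȳ` in `𝒲`; then `γ(P,Q) = c(V₁W₁)`. -/
def GammaPair3 {n : ℕ} (𝒪 𝒱 𝒲 : CWord n) (P Q : Word n) (G : CWord n) : Prop :=
  LinkedType3 𝒪 P Q ∧
  ∃ (p₁ p₂ q₁ q₂ : Letter n) (Y V₁ W₁ U U' : Word n) (j k : ℕ),
    P = p₁ :: Y ++ [p₂] ∧ Q = q₁ :: Word.bar Y ++ [q₂] ∧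
    V₁.head? = some p₂ ∧ V₁.getLast? = some p₁ ∧
    W₁.head? = some q₂ ∧ W₁.getLast? = some q₁ ∧
    𝒱 = cyc (U ++ V₁) ∧ Y <+: wpow (U ++ V₁) j ∧ Y.length % clen 𝒱 = U.length ∧
    𝒲 = cyc (U' ++ W₁) ∧ Word.bar Y <+: wpow (U' ++ W₁) k ∧
      (Word.bar Y).length % clen 𝒲 = U'.length ∧
    G = cyc (V₁ ++ W₁)

/-- `G` is the cyclic word `γ(P,Q)` associated to `(P,Q) ∈ 𝕃ℙ₂(𝒱,𝒲)`. -/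
def GammaPair {n : ℕ} (𝒪 𝒱 𝒲 : CWord n) (P Q : Word n) (G : CWord n) : Prop :=
  GammaPair12 𝒪 𝒱 𝒲 P Q G ∨ GammaPair3 𝒪 𝒱 𝒲 P Q G

open Classical in
/-- A choice of the cyclic word `γ(P,Q)` for `(P,Q) ∈ 𝕃ℙ₂(𝒱,𝒲)`. -/
noncomputable def gamma {n : ℕ} (𝒪 𝒱 𝒲 : CWord n) (P Q : Word n) : CWord n :=
  if h : ∃ G : CWord n, GammaPair 𝒪 𝒱 𝒲 P Q G then h.choose else Cycle.nil

/-- The set of non-empty reduced cyclic words, the basis of `𝕍`. -/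
def RedCyc (n : ℕ) := {𝒲 : CWord n // CReduced 𝒲}

instance {n : ℕ} [NeZero n] : Inhabited (RedCyc n) :=
  ⟨⟨cyc [default], by
    constructor
    · intro h
      have h' : ([(default : Letter n)] : Word n) = [] := (Cycle.coe_eq_nil _).mp h
      simp at h'
    · intro W hW
      have h1 : W ~r [(default : Letter n)] := Cycle.coe_eq_coe.mp hW
      have h2 : W = [(default : Letter n)] := List.perm_singleton.mp h1.perm
      rw [h2]
      exact List.IsChain.singleton _⟩⟩

open Classical in
/-- View a cyclic word as a basis element of `𝕍` (junk value if not reduced). -/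
noncomputable def toRed {n : ℕ} [NeZero n] (c : CWord n) : RedCyc n :=
  if h : CReduced c then ⟨c, h⟩ else default



lemma bar_bar {n : ℕ} (x : Letter n) : Letter.bar (Letter.bar x) = x := by
  simp [Letter.bar]

lemma ne_bar_symm {n : ℕ} {x y : Letter n} (h : x ≠ Letter.bar y) : y ≠ Letter.bar x := by
  intro he; apply h; rw [he, bar_bar]

lemma creduced_of_doubled {n : ℕ} {L : Word n} (h0 : L ≠ [])
    (h1 : FreelyReduced (L ++ L)) : CReduced (cyc L) := by
  constructor
  · intro hc
    exact h0 ((Cycle.coe_eq_nil _).mp hc)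
  · intro W hWc
    have hrot : W ~r L := Cycle.coe_eq_coe.mp hWc
    obtain ⟨m, hm⟩ := hrot.symm
    have hinf : W <:+: L ++ L := by
      rw [← hm, ← List.rotate_mod]
      have hle : m % L.length ≤ L.length :=
        le_of_lt (Nat.mod_lt _ (List.length_pos_iff.mpr h0))
      rw [List.rotate_eq_drop_append_take hle]
      refine ⟨L.take (m % L.length), L.drop (m % L.length), ?_⟩
      conv_rhs => rw [← List.take_append_drop (m % L.length) L]
      simp only [List.append_assoc, List.take_append_drop]
      rw [← List.append_assoc, List.take_append_drop]
    exact h1.infix hinf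

lemma freelyReduced_double {n : ℕ} {A B : Word n}
    (hA : FreelyReduced A) (hB : FreelyReduced B) (hAne : A ≠ []) (hBne : B ≠ [])
    (h1 : ∀ x ∈ A.getLast?, ∀ y ∈ B.head?, y ≠ Letter.bar x)
    (h2 : ∀ x ∈ B.getLast?, ∀ y ∈ A.head?, y ≠ Letter.bar x) :
    FreelyReduced ((A ++ B) ++ (A ++ B)) := by
  have hAB : FreelyReduced (A ++ B) := List.isChain_append.mpr ⟨hA, hB, h1⟩
  refine List.isChain_append.mpr ⟨hAB, hAB, ?_⟩
  intro x hx y hy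
  rw [List.getLast?_append_of_ne_nil _ hBne] at hx
  rw [List.head?_append_of_ne_nil _ hAne] at hy
  exact h2 x hx y hy

lemma wpow_succ {n : ℕ} (V : Word n) (j : ℕ) : wpow V (j + 1) = wpow V j ++ V := by
  simp [wpow, List.replicate_succ']

lemma getLast?_wpow {n : ℕ} (V : Word n) (j : ℕ) (hj : j ≠ 0) (hV : V ≠ []) :
    (wpow V j).getLast? = V.getLast? := by
  obtain ⟨j', rfl⟩ := Nat.exists_eq_succ_of_ne_zero hj
  rw [wpow_succ, List.getLast?_append_of_ne_nil _ hV]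

/-- From `CutEnds V₁ P` with `P` of length at least 2, the head of `V₁` is the
last letter of `P` and the last letter of `V₁` is the last letter of `P.dropLast`. -/
lemma cutEnds_data {n : ℕ} {V₁ P : Word n} (h : CutEnds V₁ P) (hlen : 2 ≤ P.length) :
    V₁.head? = P.getLast? ∧ V₁.getLast? = P.dropLast.getLast? := by
  obtain ⟨P', p₂, j, hPdec, hVh, hsuf⟩ := h
  have hP'ne : P' ≠ [] := by
    intro he; rw [hPdec, he] at hlen; simp at hlen
  have hj : j ≠ 0 := by
    rintro rfl
    obtain ⟨t, ht⟩ := hsuf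
    simp [wpow] at ht
    exact hP'ne ht.2
  have hVne : V₁ ≠ [] := by
    intro he; rw [he] at hVh; simp at hVh
  obtain ⟨t, ht⟩ := hsuf
  have hlast : V₁.getLast? = P'.getLast? := by
    rw [← getLast?_wpow V₁ j hj hVne, ← ht, List.getLast?_append_of_ne_nil _ hP'ne]
  constructor
  · rw [hPdec, List.getLast?_append_of_ne_nil _ (by simp), hVh]; rfl
  · rw [hPdec, List.dropLast_concat, hlast]

lemma nodup_of_o_ne {n : ℕ} {𝒪 : CWord n} (h𝒪 : SurfaceSymbol 𝒪) {L : Word n}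
    (ho : o 𝒪 (cyc L) ≠ 0) : L.Nodup := by
  obtain ⟨-, O, hO, hOnd, -⟩ := h𝒪
  have key : ∀ (W O' : Word n), cyc W = cyc L → O'.Nodup →
      W.Sublist O' → L.Nodup := by
    intro W O' hWc hO'nd hsub
    have hWnd : W.Nodup := hsub.nodup hO'nd
    have : W ~r L := Cycle.coe_eq_coe.mp hWc
    exact this.perm.nodup_iff.mp hWnd
  unfold o at ho
  split_ifs at ho with hp hn
  · obtain ⟨-, W, O', hWc, hO'c, hsub⟩ := hp
    have : O' ~r O := Cycle.coe_eq_coe.mp (hO'c.trans hO.symm)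
    exact key W O' hWc (this.perm.nodup_iff.mpr hOnd) hsub
  · obtain ⟨-, W, O', hWc, hO'c, hsub⟩ := hn
    have : O' ~r O := Cycle.coe_eq_coe.mp (hO'c.trans hO.symm)
    exact key W O'.reverse hWc
      (by simpa using (this.perm.nodup_iff.mpr hOnd)) hsub
  · exact absurd rfl ho

lemma last_ne_of_reduced {n : ℕ} {A : Word n} {b x : Letter n}
    (h : FreelyReduced (A ++ [b])) (hx : A.getLast? = some x) : b ≠ Letter.bar x := by
  have := (List.isChain_append.mp h).2.2 x hx b rfl
  exact this

/-- For reduced cyclic words `𝒲`, `𝒵` and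
`(P,Q) ∈ 𝕃ℙ₂(𝒲,𝒵)`, the cyclic word `γ(P,Q)` is non-empty and reduced. -/
theorem gamma_reduced (n : ℕ) (𝒪 𝒲 𝒵 : CWord n) (h𝒪 : SurfaceSymbol 𝒪)
    (hW : CReduced 𝒲) (hZ : CReduced 𝒵) (P Q : Word n) (h : LP2 𝒪 𝒲 𝒵 P Q)
    (G : CWord n) (hG : GammaPair 𝒪 𝒲 𝒵 P Q G) :
    G ≠ Cycle.nil ∧ CReduced G := by
  obtain ⟨⟨hPred, hQred, hPlen, hQlen, -⟩, -⟩ := h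
  suffices hred : CReduced G from ⟨hred.1, hred⟩
  rcases hG with ⟨hLT, V₁, W₁, hVc, hWc, hcutP, hcutQ, hGeq⟩ |
      ⟨hLT3, p₁, p₂, q₁, q₂, Y, V₁, W₁, U, U', j, k, hP, hQ, hVh, hVl, hWh, hWl,
        h𝒲eq, -, -, h𝒵eq, -, -, hGeq⟩
  · -- types (1) and (2)
    obtain ⟨hVhead, hVlast⟩ := cutEnds_data hcutP hPlen
    obtain ⟨hWhead, hWlast⟩ := cutEnds_data hcutQ hQlen
    have hVred : FreelyReduced V₁ := hW.2 V₁ hVc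
    have hWred : FreelyReduced W₁ := hZ.2 W₁ hWc
    have hPne : P ≠ [] := by intro he; rw [he] at hPlen; simp at hPlen
    have hQne : Q ≠ [] := by intro he; rw [he] at hQlen; simp at hQlen
    have hVne : V₁ ≠ [] := by
      intro he
      have hsome := List.getLast?_isSome.mpr hPne
      rw [← hVhead, he] at hsome
      simp at hsome
    have hWne : W₁ ≠ [] := by
      intro he
      have hsome := List.getLast?_isSome.mpr hQne
      rw [← hWhead, he] at hsome
      simp at hsome
    rw [hGeq]
    refine creduced_of_doubled (by simp [hVne]) ?_
    rcases hLT with ⟨p₁, p₂, q₁, q₂, hP, hQ, ho⟩ | ⟨p₁, p₂, q₁, q₂, Y, hYne, hP, hQ, -, -, -⟩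
    · -- type 1
      have hnd : ([Letter.bar p₁, Letter.bar q₁, p₂, q₂] : Word n).Nodup :=
        nodup_of_o_ne h𝒪 ho
      have h1 : q₂ ≠ Letter.bar p₁ := by
        intro he; rw [he] at hnd; simp at hnd
      have h2 : p₂ ≠ Letter.bar q₁ := by
        intro he; rw [he] at hnd; simp at hnd
      have hVl : V₁.getLast? = some p₁ := by rw [hVlast, hP]; rfl
      have hWl : W₁.getLast? = some q₁ := by rw [hWlast, hQ]; rfl
      have hVh : V₁.head? = some p₂ := by
        rw [hVhead, hP]; rfl
      have hWh : W₁.head? = some q₂ := by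
        rw [hWhead, hQ]; rfl
      refine freelyReduced_double hVred hWred hVne hWne ?_ ?_
      · intro x hx y hy
        rw [hVl] at hx; rw [hWh] at hy
        simp only [Option.mem_def, Option.some.injEq] at hx hy
        subst hx; subst hy; exact h1
      · intro x hx y hy
        rw [hWl] at hx; rw [hVh] at hy
        simp only [Option.mem_def, Option.some.injEq] at hx hy
        subst hx; subst hy; exact h2
    · -- type 2
      obtain ⟨x₂, hx₂⟩ := List.getLast?_isSome.mpr hYne |> Option.isSome_iff_exists.mp
      have hdropP : P.dropLast = p₁ :: Y := by
        rw [hP, show p₁ :: Y ++ [p₂] = (p₁ :: Y) ++ [p₂] by simp, List.dropLast_concat]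
      have hdropQ : Q.dropLast = q₁ :: Y := by
        rw [hQ, show q₁ :: Y ++ [q₂] = (q₁ :: Y) ++ [q₂] by simp, List.dropLast_concat]
      have hgl : ∀ a : Letter n, (a :: Y).getLast? = some x₂ := by
        intro a
        rw [show a :: Y = [a] ++ Y by simp, List.getLast?_append_of_ne_nil _ hYne, hx₂]
      have hVl : V₁.getLast? = some x₂ := by rw [hVlast, hdropP, hgl]
      have hWl : W₁.getLast? = some x₂ := by rw [hWlast, hdropQ, hgl]
      have hVh : V₁.head? = some p₂ := by
        rw [hVhead, hP]
        rw [show p₁ :: Y ++ [p₂] = (p₁ :: Y) ++ [p₂] by simp,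
          List.getLast?_append_of_ne_nil _ (by simp)]
        rfl
      have hWh : W₁.head? = some q₂ := by
        rw [hWhead, hQ]
        rw [show q₁ :: Y ++ [q₂] = (q₁ :: Y) ++ [q₂] by simp,
          List.getLast?_append_of_ne_nil _ (by simp)]
        rfl
      have h1 : q₂ ≠ Letter.bar x₂ := by
        refine last_ne_of_reduced (A := q₁ :: Y) ?_ (hgl q₁)
        rw [← hQ] at *; simpa [hQ] using hQred
      have h2 : p₂ ≠ Letter.bar x₂ := by
        refine last_ne_of_reduced (A := p₁ :: Y) ?_ (hgl p₁)
        simpa [hP] using hPred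
      refine freelyReduced_double hVred hWred hVne hWne ?_ ?_
      · intro x hx y hy
        rw [hVl] at hx; rw [hWh] at hy
        simp only [Option.mem_def, Option.some.injEq] at hx hy
        subst hx; subst hy; exact h1
      · intro x hx y hy
        rw [hWl] at hx; rw [hVh] at hy
        simp only [Option.mem_def, Option.some.injEq] at hx hy
        subst hx; subst hy; exact h2
  · -- type 3
    obtain ⟨p₁', p₂', q₁', q₂', Y', hY'ne, hP', hQ', hne1, hne2, -⟩ := hLT3
    have hp₁ : p₁' = p₁ := by
      have := hP.symm.trans hP'
      exact (List.cons.injEq _ _ _ _ ▸ this).1.symm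
    have hq₁ : q₁' = q₁ := by
      have := hQ.symm.trans hQ'
      exact (List.cons.injEq _ _ _ _ ▸ this).1.symm
    have hp₂ : p₂' = p₂ := by
      have h1 : P.getLast? = some p₂ := by
        rw [hP, show p₁ :: Y ++ [p₂] = (p₁ :: Y) ++ [p₂] by simp,
          List.getLast?_append_of_ne_nil _ (by simp)]; rfl
      have h2 : P.getLast? = some p₂' := by
        rw [hP', show p₁' :: Y' ++ [p₂'] = (p₁' :: Y') ++ [p₂'] by simp,
          List.getLast?_append_of_ne_nil _ (by simp)]; rfl
      rw [h1] at h2; exact (Option.some_injective _ h2).symm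
    have hq₂ : q₂' = q₂ := by
      have h1 : Q.getLast? = some q₂ := by
        rw [hQ, show q₁ :: Word.bar Y ++ [q₂] = (q₁ :: Word.bar Y) ++ [q₂] by simp,
          List.getLast?_append_of_ne_nil _ (by simp)]; rfl
      have h2 : Q.getLast? = some q₂' := by
        rw [hQ', show q₁' :: Word.bar Y' ++ [q₂'] = (q₁' :: Word.bar Y') ++ [q₂'] by simp,
          List.getLast?_append_of_ne_nil _ (by simp)]; rfl
      rw [h1] at h2; exact (Option.some_injective _ h2).symm
    subst hp₁; subst hp₂; subst hq₁; subst hq₂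
    have hVne : V₁ ≠ [] := by intro he; rw [he] at hVh; simp at hVh
    have hWne : W₁ ≠ [] := by intro he; rw [he] at hWh; simp at hWh
    have hVred : FreelyReduced V₁ :=
      (hW.2 (U ++ V₁) h𝒲eq.symm).suffix ⟨U, rfl⟩
    have hWred : FreelyReduced W₁ :=
      (hZ.2 (U' ++ W₁) h𝒵eq.symm).suffix ⟨U', rfl⟩
    rw [hGeq]
    refine creduced_of_doubled (by simp [hVne]) ?_
    refine freelyReduced_double hVred hWred hVne hWne ?_ ?_
    · intro x hx y hy
      rw [hVl] at hx; rw [hWh] at hy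
      simp only [Option.mem_def, Option.some.injEq] at hx hy
      subst hx; subst hy
      exact ne_bar_symm hne1
    · intro x hx y hy
      rw [hWl] at hx; rw [hVh] at hy
      simp only [Option.mem_def, Option.some.injEq] at hx hy
      subst hx; subst hy
      exact hne2

end CyclicWords
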